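/- Let X be a locally compact Hausdorff space and let μ be a deficient topological measure on X. The following are equivalent: (a) μ(C ∪ K) ≤ μ(C) + μ(K) for all compact sets C, K; (b) μ(U ∪ V) ≤ μ(U) + μ(V) for all open sets U, V; (c) μ admits a unique extension to a Borel measure m on the Borel σ-algebra of X that is outer regular on all Borel sets and inner regular on open sets, and agrees with μ on open and closed sets. -/

import Mathlib

open Set Classical
open scoped ENNReal NNReal

variable {X : Type*}

/-- A deficient topological measure on a locally compact space `X`: a set function on open
and closed subsets of `X` with values in `[0,∞]`, not identically `∞`, finitely additive on
compact sets, inner compact regular on open sets, and outer regular on closed sets.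
(Values on sets that are neither open nor closed are irrelevant.) -/
def IsDTM [TopologicalSpace X] (ν : Set X → ℝ≥0∞) : Prop :=
  (∃ A : Set X, (IsOpen A ∨ IsClosed A) ∧ ν A ≠ ⊤) ∧
  (∀ C K : Set X, IsCompact C → IsCompact K → Disjoint C K → ν (C ∪ K) = ν C + ν K) ∧
  (∀ U : Set X, IsOpen U → ν U = ⨆ (K : Set X) (_ : IsCompact K ∧ K ⊆ U), ν K) ∧
  (∀ F : Set X, IsClosed F → ν F = ⨅ (U : Set X) (_ : IsOpen U ∧ F ⊆ U), ν U)

open MeasureTheory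

section Aux

variable [TopologicalSpace X] [T2Space X] {μ : Set X → ℝ≥0∞}

/-- Shorthand for the inner-regularity hypothesis. -/
def DTMreg [TopologicalSpace X] (μ : Set X → ℝ≥0∞) : Prop :=
  ∀ U : Set X, IsOpen U → μ U = ⨆ (K : Set X) (_ : IsCompact K ∧ K ⊆ U), μ K

/-- Shorthand for the outer-regularity hypothesis. -/
def DTMouter [TopologicalSpace X] (μ : Set X → ℝ≥0∞) : Prop :=
  ∀ F : Set X, IsClosed F → μ F = ⨅ (U : Set X) (_ : IsOpen U ∧ F ⊆ U), μ U

lemma DTM.mono_co (hreg : DTMreg μ) {K U : Set X} (hK : IsCompact K) (hU : IsOpen U)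
    (hKU : K ⊆ U) : μ K ≤ μ U := by
  rw [hreg U hU]
  exact le_iSup₂ (f := fun (K : Set X) (_ : IsCompact K ∧ K ⊆ U) => μ K) K ⟨hK, hKU⟩

lemma DTM.mono_oo (hreg : DTMreg μ) {U V : Set X} (hU : IsOpen U) (hV : IsOpen V)
    (hUV : U ⊆ V) : μ U ≤ μ V := by
  rw [hreg U hU]
  exact iSup₂_le fun K hK => DTM.mono_co hreg hK.1 hV (hK.2.trans hUV)

lemma DTM.mono_clo (houter : DTMouter μ) {F W : Set X} (hF : IsClosed F) (hW : IsOpen W)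
    (hFW : F ⊆ W) : μ F ≤ μ W := by
  rw [houter F hF]
  exact iInf₂_le W ⟨hW, hFW⟩

lemma DTM.mono_cc (houter : DTMouter μ) {F G : Set X} (hF : IsClosed F) (hG : IsClosed G)
    (hFG : F ⊆ G) : μ F ≤ μ G := by
  rw [houter F hF, houter G hG]
  exact le_iInf₂ fun U hU => iInf₂_le U ⟨hU.1, hFG.trans hU.2⟩

lemma DTM.empty (hμ : IsDTM μ) : μ ∅ = 0 := by
  obtain ⟨⟨A, hA, hAfin⟩, hadd, hreg, houter⟩ := hμ
  have hW : ∃ W : Set X, IsOpen W ∧ μ W ≠ ⊤ := by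
    rcases hA with hA | hA
    · exact ⟨A, hA, hAfin⟩
    · have h1 : (⨅ (U : Set X) (_ : IsOpen U ∧ A ⊆ U), μ U) < ⊤ := by
        rw [← houter A hA]; exact lt_top_iff_ne_top.2 hAfin
      simp only [iInf_lt_iff] at h1
      obtain ⟨U, hU, hUlt⟩ := h1
      exact ⟨U, hU.1, hUlt.ne⟩
  obtain ⟨W, hWo, hWfin⟩ := hW
  have h0 : μ ∅ ≤ μ W := DTM.mono_co hreg isCompact_empty hWo (empty_subset _)
  have hne : μ ∅ ≠ ⊤ := fun h => hWfin (top_le_iff.1 (h ▸ h0))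
  have h2 : μ ∅ + μ ∅ = μ ∅ + 0 := by
    have := hadd ∅ ∅ isCompact_empty isCompact_empty (by simp)
    simpa using this.symm
  exact (ENNReal.add_right_inj hne).1 h2

/-- Finite subadditivity on open sets. -/
lemma DTM.finset_sub (hμ : IsDTM μ)
    (hsub : ∀ U V : Set X, IsOpen U → IsOpen V → μ (U ∪ V) ≤ μ U + μ V)
    {ι : Type*} (t : Finset ι) (U : ι → Set X) (hU : ∀ i, IsOpen (U i)) :
    μ (⋃ i ∈ t, U i) ≤ ∑ i ∈ t, μ (U i) := by
  classical
  induction t using Finset.induction_on with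
  | empty => simp [DTM.empty hμ]
  | insert a t ha ih =>
    rw [Finset.set_biUnion_insert, Finset.sum_insert ha]
    calc μ (U a ∪ ⋃ i ∈ t, U i) ≤ μ (U a) + μ (⋃ i ∈ t, U i) :=
          hsub _ _ (hU a) (isOpen_biUnion fun i _ => hU i)
      _ ≤ μ (U a) + ∑ i ∈ t, μ (U i) := add_le_add_right ih _

/-- Countable subadditivity on open sets. -/
lemma DTM.count_sub (hμ : IsDTM μ)
    (hsub : ∀ U V : Set X, IsOpen U → IsOpen V → μ (U ∪ V) ≤ μ U + μ V)
    (U : ℕ → Set X) (hU : ∀ n, IsOpen (U n)) :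
    μ (⋃ n, U n) ≤ ∑' n, μ (U n) := by
  have hreg := hμ.2.2.1
  rw [hreg _ (isOpen_iUnion hU)]
  refine iSup₂_le fun K hK => ?_
  obtain ⟨t, ht⟩ := hK.1.elim_finite_subcover U hU hK.2
  calc μ K ≤ μ (⋃ i ∈ t, U i) :=
        DTM.mono_co hreg hK.1 (isOpen_biUnion fun i _ => hU i) ht
    _ ≤ ∑ i ∈ t, μ (U i) := DTM.finset_sub hμ hsub t U hU
    _ ≤ ∑' i, μ (U i) := ENNReal.sum_le_tsum t

/-- The outer-regularization of `μ`. -/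
noncomputable def DTM.lam [TopologicalSpace X] (μ : Set X → ℝ≥0∞) (E : Set X) : ℝ≥0∞ :=
  ⨅ (U : Set X) (_ : IsOpen U ∧ E ⊆ U), μ U

lemma DTM.lam_mono {E F : Set X} (h : E ⊆ F) : DTM.lam μ E ≤ DTM.lam μ F :=
  le_iInf₂ fun U hU => iInf₂_le U ⟨hU.1, h.trans hU.2⟩

lemma DTM.lam_open (hreg : DTMreg μ) {U : Set X} (hU : IsOpen U) : DTM.lam μ U = μ U := by
  refine le_antisymm (iInf₂_le U ⟨hU, subset_rfl⟩) ?_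
  exact le_iInf₂ fun V hV => DTM.mono_oo hreg hU hV.1 hV.2

lemma DTM.lam_closed (houter : DTMouter μ) {F : Set X} (hF : IsClosed F) :
    DTM.lam μ F = μ F := (houter F hF).symm

lemma DTM.lam_le_open {E U : Set X} (hU : IsOpen U) (hEU : E ⊆ U) : DTM.lam μ E ≤ μ U :=
  iInf₂_le U ⟨hU, hEU⟩

lemma DTM.lam_iUnion (hμ : IsDTM μ)
    (hsub : ∀ U V : Set X, IsOpen U → IsOpen V → μ (U ∪ V) ≤ μ U + μ V)
    (E : ℕ → Set X) : DTM.lam μ (⋃ n, E n) ≤ ∑' n, DTM.lam μ (E n) := by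
  refine ENNReal.le_of_forall_pos_le_add fun ε hε hlt => ?_
  obtain ⟨δ, hδpos, hδsum⟩ :=
    ENNReal.exists_pos_sum_of_countable' (ε := (ε : ℝ≥0∞)) (by exact_mod_cast hε.ne') ℕ
  have hfin : ∀ n, DTM.lam μ (E n) < ⊤ := fun n => lt_of_le_of_lt (ENNReal.le_tsum n) hlt
  have hex : ∀ n, ∃ U : Set X, (IsOpen U ∧ E n ⊆ U) ∧ μ U ≤ DTM.lam μ (E n) + δ n := by
    intro n
    have h1 : DTM.lam μ (E n) < DTM.lam μ (E n) + δ n :=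
      ENNReal.lt_add_right (hfin n).ne (hδpos n).ne'
    have h2 : (⨅ (U : Set X) (_ : IsOpen U ∧ E n ⊆ U), μ U) < DTM.lam μ (E n) + δ n := h1
    simp only [iInf_lt_iff] at h2
    obtain ⟨U, hU, hUlt⟩ := h2
    exact ⟨U, hU, hUlt.le⟩
  choose U hU hUle using hex
  calc DTM.lam μ (⋃ n, E n) ≤ μ (⋃ n, U n) :=
        DTM.lam_le_open (isOpen_iUnion fun n => (hU n).1)
          (Set.iUnion_mono fun n => (hU n).2)
    _ ≤ ∑' n, μ (U n) := DTM.count_sub hμ hsub U fun n => (hU n).1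
    _ ≤ ∑' n, (DTM.lam μ (E n) + δ n) := ENNReal.tsum_le_tsum hUle
    _ = (∑' n, DTM.lam μ (E n)) + ∑' n, δ n := ENNReal.tsum_add
    _ ≤ (∑' n, DTM.lam μ (E n)) + ε := add_le_add_right hδsum.le _

/-- The outer measure induced by `μ`. -/
noncomputable def DTM.Lam [TopologicalSpace X] (μ : Set X → ℝ≥0∞) (hμ : IsDTM μ) [T2Space X]
    (hsub : ∀ U V : Set X, IsOpen U → IsOpen V → μ (U ∪ V) ≤ μ U + μ V) :
    OuterMeasure X where
  measureOf := DTM.lam μ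
  empty := by
    refine le_antisymm ?_ zero_le
    rw [← DTM.empty hμ]
    exact DTM.lam_le_open isOpen_empty subset_rfl |>.trans_eq rfl
  mono := fun h => DTM.lam_mono h
  iUnion_nat := fun s _ => DTM.lam_iUnion hμ hsub s

/-- Key inequality: for a compact `K` inside an open `V`, `μ K + μ (V \ K) ≤ μ V`. -/
lemma DTM.key (hμ : IsDTM μ) {K V : Set X} (hK : IsCompact K) (hV : IsOpen V)
    (hKV : K ⊆ V) : μ K + μ (V \ K) ≤ μ V := by
  obtain ⟨-, hadd, hreg, -⟩ := hμ
  have hVK : IsOpen (V \ K) := hV.sdiff hK.isClosed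
  rw [hreg _ hVK]
  rw [ENNReal.add_biSup' (p := fun C : Set X => IsCompact C ∧ C ⊆ V \ K)
    ⟨∅, isCompact_empty, empty_subset _⟩ (fun C => μ C)]
  refine iSup₂_le fun C hC => ?_
  have hdisj : Disjoint K C := Set.disjoint_left.2 fun x hxK hxC => (hC.2 hxC).2 hxK
  have := hadd K C hK hC.1 hdisj
  rw [← this]
  exact DTM.mono_co hreg (hK.union hC.1) hV (Set.union_subset hKV ((hC.2).trans diff_subset))

/-- Open sets are Carathéodory measurable for `Λ`. -/
lemma DTM.carat (hμ : IsDTM μ)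
    (hsub : ∀ U V : Set X, IsOpen U → IsOpen V → μ (U ∪ V) ≤ μ U + μ V)
    {U : Set X} (hU : IsOpen U) :
    MeasurableSet[(DTM.Lam μ hμ hsub).caratheodory] U := by
  obtain ⟨hex, hadd, hreg, houter⟩ := hμ
  rw [OuterMeasure.isCaratheodory_iff_le]
  intro t
  show DTM.lam μ (t ∩ U) + DTM.lam μ (t \ U) ≤ DTM.lam μ t
  refine le_iInf₂ fun V hV => ?_
  -- hV : IsOpen V ∧ t ⊆ V ; goal : lam (t ∩ U) + lam (t \ U) ≤ μ V
  obtain ⟨hVo, htV⟩ := hV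
  have hVU : IsOpen (V ∩ U) := hVo.inter hU
  have key : ∀ K : Set X, IsCompact K → K ⊆ V ∩ U → μ K + DTM.lam μ (t \ U) ≤ μ V := by
    intro K hK hKVU
    have h1 : t \ U ⊆ V \ K := fun x hx =>
      ⟨htV hx.1, fun hxK => hx.2 (hKVU hxK).2⟩
    have h2 : DTM.lam μ (t \ U) ≤ μ (V \ K) :=
      DTM.lam_le_open (hVo.sdiff hK.isClosed) h1
    calc μ K + DTM.lam μ (t \ U) ≤ μ K + μ (V \ K) := add_le_add_right h2 _
      _ ≤ μ V := DTM.key ⟨hex, hadd, hreg, houter⟩ hK hVo (hKVU.trans inter_subset_left)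
  calc DTM.lam μ (t ∩ U) + DTM.lam μ (t \ U)
      ≤ μ (V ∩ U) + DTM.lam μ (t \ U) :=
        add_le_add_left (DTM.lam_le_open hVU (inter_subset_inter htV subset_rfl)) _
    _ = (⨆ (K : Set X) (_ : IsCompact K ∧ K ⊆ V ∩ U), μ K) + DTM.lam μ (t \ U) := by
        rw [← hreg _ hVU]
    _ ≤ μ V := by
        rw [ENNReal.biSup_add' (p := fun K : Set X => IsCompact K ∧ K ⊆ V ∩ U)
          ⟨∅, isCompact_empty, empty_subset _⟩ (fun K => μ K)]
        exact iSup₂_le fun K hK => key K hK.1 hK.2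

end Aux

/-- Theorem 4.8: for a deficient topological measure `μ` on a locally compact Hausdorff
space, the following are equivalent: (a) `μ(C ∪ K) ≤ μ(C) + μ(K)` for all compact `C, K`;
(b) `μ(U ∪ V) ≤ μ(U) + μ(V)` for all open `U, V`; (c) `μ` admits a unique extension to a
Borel measure that is outer regular on all Borel sets and inner compact regular on open sets
and agrees with `μ` on open and closed sets. -/
theorem dtm_subadditive_tfae
    [TopologicalSpace X] [LocallyCompactSpace X] [T2Space X]
    [MeasurableSpace X] [BorelSpace X]
    (μ : Set X → ℝ≥0∞) (hμ : IsDTM μ) :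
    ((∀ C K : Set X, IsCompact C → IsCompact K → μ (C ∪ K) ≤ μ C + μ K) ↔
     (∀ U V : Set X, IsOpen U → IsOpen V → μ (U ∪ V) ≤ μ U + μ V)) ∧
    ((∀ U V : Set X, IsOpen U → IsOpen V → μ (U ∪ V) ≤ μ U + μ V) ↔
     (∃ m : Measure X,
       (∀ E : Set X, MeasurableSet E →
         m E = ⨅ (U : Set X) (_ : IsOpen U ∧ E ⊆ U), m U) ∧
       (∀ U : Set X, IsOpen U →
         m U = ⨆ (K : Set X) (_ : IsCompact K ∧ K ⊆ U), m K) ∧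
       (∀ A : Set X, IsOpen A ∨ IsClosed A → m A = μ A) ∧
       (∀ m₂ : Measure X,
         (∀ E : Set X, MeasurableSet E →
           m₂ E = ⨅ (U : Set X) (_ : IsOpen U ∧ E ⊆ U), m₂ U) →
         (∀ U : Set X, IsOpen U →
           m₂ U = ⨆ (K : Set X) (_ : IsCompact K ∧ K ⊆ U), m₂ K) →
         (∀ A : Set X, IsOpen A ∨ IsClosed A → m₂ A = μ A) →
         ∀ E : Set X, MeasurableSet E → m₂ E = m E))) := by
  obtain ⟨hex, hadd, hreg, houter⟩ := hμ
  have hμ' : IsDTM μ := ⟨hex, hadd, hreg, houter⟩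
  constructor
  · -- (a) ↔ (b)
    constructor
    · intro ha U V hU hV
      rw [hreg _ (hU.union hV)]
      refine iSup₂_le fun K hK => ?_
      obtain ⟨K₁, K₂, hK₁, hK₂, hK₁U, hK₂V, hKeq⟩ :=
        hK.1.binary_compact_cover hU hV hK.2
      calc μ K = μ (K₁ ∪ K₂) := by rw [hKeq]
        _ ≤ μ K₁ + μ K₂ := ha K₁ K₂ hK₁ hK₂
        _ ≤ μ U + μ V := add_le_add (DTM.mono_co hreg hK₁ hU hK₁U)
            (DTM.mono_co hreg hK₂ hV hK₂V)
    · intro hb C K hC hK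
      refine ENNReal.le_of_forall_pos_le_add fun ε hε hlt => ?_
      have hCfin : μ C < ⊤ := lt_of_le_of_lt le_self_add hlt
      have hKfin : μ K < ⊤ := lt_of_le_of_lt le_add_self hlt
      have hε2 : (0 : ℝ≥0∞) < (ε : ℝ≥0∞) / 2 := by
        simp [ENNReal.div_pos_iff, hε.ne']
      have hexU : ∃ U : Set X, (IsOpen U ∧ C ⊆ U) ∧ μ U ≤ μ C + (ε : ℝ≥0∞) / 2 := by
        have h1 : (⨅ (U : Set X) (_ : IsOpen U ∧ C ⊆ U), μ U) < μ C + (ε : ℝ≥0∞) / 2 := by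
          rw [← houter C hC.isClosed]
          exact ENNReal.lt_add_right hCfin.ne hε2.ne'
        simp only [iInf_lt_iff] at h1
        obtain ⟨U, hU, hUlt⟩ := h1
        exact ⟨U, hU, hUlt.le⟩
      have hexV : ∃ V : Set X, (IsOpen V ∧ K ⊆ V) ∧ μ V ≤ μ K + (ε : ℝ≥0∞) / 2 := by
        have h1 : (⨅ (U : Set X) (_ : IsOpen U ∧ K ⊆ U), μ U) < μ K + (ε : ℝ≥0∞) / 2 := by
          rw [← houter K hK.isClosed]
          exact ENNReal.lt_add_right hKfin.ne hε2.ne'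
        simp only [iInf_lt_iff] at h1
        obtain ⟨V, hV, hVlt⟩ := h1
        exact ⟨V, hV, hVlt.le⟩
      obtain ⟨U, ⟨hUo, hCU⟩, hUle⟩ := hexU
      obtain ⟨V, ⟨hVo, hKV⟩, hVle⟩ := hexV
      calc μ (C ∪ K) ≤ μ (U ∪ V) :=
            DTM.mono_clo houter (hC.isClosed.union hK.isClosed) (hUo.union hVo)
              (Set.union_subset_union hCU hKV)
        _ ≤ μ U + μ V := hb U V hUo hVo
        _ ≤ (μ C + (ε : ℝ≥0∞) / 2) + (μ K + (ε : ℝ≥0∞) / 2) := add_le_add hUle hVle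
        _ = μ C + μ K + ε := by
            rw [add_add_add_comm, ENNReal.add_halves]
  · -- (b) ↔ (c)
    constructor
    · intro hb
      set Λ := DTM.Lam μ hμ' hb with hΛ
      have hcar : (inferInstance : MeasurableSpace X) ≤ Λ.caratheodory := by
        rw [BorelSpace.measurable_eq (α := X)]
        exact MeasurableSpace.generateFrom_le fun s hs => DTM.carat hμ' hb hs
      set m := Λ.toMeasure hcar with hm
      have hmE : ∀ E : Set X, MeasurableSet E → m E = DTM.lam μ E := fun E hE =>
        toMeasure_apply Λ hcar hE
      have hmopen : ∀ U : Set X, IsOpen U → m U = μ U := fun U hU => by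
        rw [hmE U hU.measurableSet, DTM.lam_open hreg hU]
      have hmclosed : ∀ F : Set X, IsClosed F → m F = μ F := fun F hF => by
        rw [hmE F hF.measurableSet, DTM.lam_closed houter hF]
      refine ⟨m, ?_, ?_, ?_, ?_⟩
      · intro E hE
        rw [hmE E hE]
        refine iInf_congr fun U => iInf_congr fun hU => ?_
        rw [hmopen U hU.1]
      · intro U hU
        rw [hmopen U hU, hreg U hU]
        refine iSup_congr fun K => iSup_congr fun hK => ?_
        rw [hmclosed K hK.1.isClosed]
      · intro A hA
        rcases hA with hA | hA
        · exact hmopen A hA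
        · exact hmclosed A hA
      · intro m₂ h1 _h2 h3 E hE
        rw [h1 E hE, hmE E hE]
        refine iInf_congr fun U => iInf_congr fun hU => ?_
        rw [h3 U (Or.inl hU.1)]
    · rintro ⟨m, h1, _h2, h3, _h4⟩ U V hU hV
      calc μ (U ∪ V) = m (U ∪ V) := (h3 _ (Or.inl (hU.union hV))).symm
        _ ≤ m U + m V := measure_union_le U V
        _ = μ U + μ V := by rw [h3 U (Or.inl hU), h3 V (Or.inl hV)]
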